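/- arXiv:1704.05655 — 4 statements merged into one kernel-verified Lean document; each statement's English description precedes it below -/
import Mathlib

section
/- (Theorem 1) The Pursuer has a winning strategy in a generalized Cops and Robbers game G if and only if there exists a Pursuer start position p_P ∈ I_P such that, for every q_E ∈ I_E(p_P), either (p_P, q_E) ∈ F or there exists w_P ∈ A_P(p_P, q_E) such that q_E ≼ w_P. -/
open Classical

/-- A generalized Cops and Robbers game on Pursuer positions `PP` and Evader positions `PE`.
`F` is the set of final positions, `I` the set of allowed start positions, and
`AP`/`AE` give the (nonempty) sets of allowed moves of the Pursuer/Evader from a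
non-final position (a move changes only that player's own coordinate). -/
structure GCR (PP PE : Type*) where
  F : PP → PE → Prop
  I : PP → PE → Prop
  AP : PP → PE → Set PP
  AE : PP → PE → Set PE
  I_nonempty : ∃ p q, I p q
  AP_nonempty : ∀ p q, ¬ F p q → (AP p q).Nonempty
  AE_nonempty : ∀ p q, ¬ F p q → (AE p q).Nonempty

namespace GCR

variable {PP PE : Type*}

/-- The Pursuer's allowed start positions `I_P`. -/
def IP (G : GCR PP PE) (p : PP) : Prop := ∃ q, G.I p q

/-- The Evader's allowed start positions `I_E(p)` against the Pursuer start `p`. -/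
def IE (G : GCR PP PE) (p : PP) (q : PE) : Prop := G.I p q

/-- The sequence of relations `≼_i` from Evader positions to Pursuer positions:
`q ≼_0 p` iff `(p,q) ∈ F`; and for `i ≥ 1`, `q ≼_i p` iff `(p,q) ∈ F` or for every
`x ∈ A_E(p,q)` either `(p,x) ∈ F` or there is `w ∈ A_P(p,x)` with `x ≼_j w` for some `j < i`. -/
def rel (G : GCR PP PE) : ℕ → PE → PP → Prop
  | 0, q, p => G.F p q
  | (i+1), q, p => G.F p q ∨
      ∀ x ∈ G.AE p q, G.F p x ∨ ∃ w ∈ G.AP p x, ∃ j, ∃ _ : j < i + 1, G.rel j x w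
  termination_by i _ _ => i
  decreasing_by omega

/-- The stabilized relation `≼`. -/
def Rel (G : GCR PP PE) (q : PE) (p : PP) : Prop := ∃ i, G.rel i q p

/-- A strategy for the Pursuer: an initial position together with a move for every
finite history of positions (most recent first). -/
structure PStrat (G : GCR PP PE) where
  init : PP
  move : List (PP × PE) → PP

/-- A strategy for the Evader: an initial position (depending on the Pursuer's choice)
together with a move for every finite history of positions (most recent first). -/
structure EStrat (G : GCR PP PE) where
  init : PP → PE
  move : List (PP × PE) → PE

/-- A Pursuer strategy plays allowed moves at every non-final position. -/
def PStrat.MovesValid {G : GCR PP PE} (σ : PStrat G) : Prop :=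
  ∀ (h : List (PP × PE)) (c : PP × PE), ¬ G.F c.1 c.2 → σ.move (c :: h) ∈ G.AP c.1 c.2

/-- An Evader strategy plays allowed moves at every non-final position. -/
def EStrat.MovesValid {G : GCR PP PE} (τ : EStrat G) : Prop :=
  ∀ (h : List (PP × PE)) (c : PP × PE), ¬ G.F c.1 c.2 → τ.move (c :: h) ∈ G.AE c.1 c.2

/-- A valid Pursuer strategy: the initial position is an allowed start position,
and all moves are allowed. -/
def PStrat.Valid {G : GCR PP PE} (σ : PStrat G) : Prop :=
  G.IP σ.init ∧ σ.MovesValid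

/-- A valid Evader strategy: the initial position is an allowed response to any allowed
Pursuer start position, and all moves are allowed. -/
def EStrat.Valid {G : GCR PP PE} (τ : EStrat G) : Prop :=
  (∀ p, G.IP p → G.IE p (τ.init p)) ∧ τ.MovesValid

/-- The play of the game determined by strategies `σ` and `τ`: first both players choose
their start positions, then they move alternately with the Pursuer moving first.
Returns the current position after `n` single moves together with the history so far. -/
def play (G : GCR PP PE) (σ : PStrat G) (τ : EStrat G) : ℕ → (PP × PE) × List (PP × PE)
  | 0 => ((σ.init, τ.init σ.init), [(σ.init, τ.init σ.init)])
  | (n+1) =>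
      let s := play G σ τ n
      let nxt := if n % 2 = 0 then (σ.move s.2, s.1.2) else (s.1.1, τ.move s.2)
      (nxt, nxt :: s.2)

/-- The position after `n` single moves of the play determined by `σ` and `τ`. -/
def pos (G : GCR PP PE) (σ : PStrat G) (τ : EStrat G) (n : ℕ) : PP × PE :=
  (play G σ τ n).1

/-- Play from a given mid-game position `start`; `pFirst = true` means the Pursuer is
next to move. The players move alternately. Returns the current position after `n`
single moves together with the history so far. -/
def playFrom (G : GCR PP PE) (σ : PStrat G) (τ : EStrat G) (start : PP × PE)
    (pFirst : Bool) : ℕ → (PP × PE) × List (PP × PE)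
  | 0 => (start, [start])
  | (n+1) =>
      let s := playFrom G σ τ start pFirst n
      let nxt := if (decide (n % 2 = 0)) == pFirst
        then (σ.move s.2, s.1.2) else (s.1.1, τ.move s.2)
      (nxt, nxt :: s.2)

/-- The position after `n` single moves of the play from state `(start, pFirst)`. -/
def posFrom (G : GCR PP PE) (σ : PStrat G) (τ : EStrat G) (start : PP × PE)
    (pFirst : Bool) (n : ℕ) : PP × PE :=
  (playFrom G σ τ start pFirst n).1

/-- The Pursuer has a winning strategy: a valid strategy such that against every valid
Evader strategy the position eventually belongs to `F`. -/
def PursuerWins (G : GCR PP PE) : Prop :=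
  ∃ σ : PStrat G, σ.Valid ∧ ∀ τ : EStrat G, τ.Valid →
    ∃ n, G.F (pos G σ τ n).1 (pos G σ τ n).2

/-- The Evader has a winning strategy: a valid strategy such that against every valid
Pursuer strategy the position never belongs to `F`. -/
def EvaderWins (G : GCR PP PE) : Prop :=
  ∃ τ : EStrat G, τ.Valid ∧ ∀ σ : PStrat G, σ.Valid →
    ∀ n, ¬ G.F (pos G σ τ n).1 (pos G σ τ n).2

/-! ### The state digraph and its labelling -/

/-- The initial labelling of the state digraph: final states get `0`, all others `∞`.
A state is a position together with a `Bool` which is `true` when the Pursuer is next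
to move. -/
noncomputable def labelInit (G : GCR PP PE) : (PP × PE) × Bool → ℕ∞ :=
  fun s => if G.F s.1.1 s.1.2 then 0 else ⊤

/-- One round of updates of the labelling procedure: a non-final Pursuer-to-move state
gets `1 +` the minimum label over its out-neighbours, and a non-final Evader-to-move
state gets `1 +` the maximum label over its out-neighbours. -/
noncomputable def labelStep (G : GCR PP PE) (f : (PP × PE) × Bool → ℕ∞) :
    (PP × PE) × Bool → ℕ∞ :=
  fun s =>
    if G.F s.1.1 s.1.2 then 0
    else if s.2 then 1 + ⨅ w ∈ G.AP s.1.1 s.1.2, f ((w, s.1.2), false)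
    else 1 + ⨆ x ∈ G.AE s.1.1 s.1.2, f ((s.1.1, x), true)

/-- The stable labelling of the state digraph, obtained by repeating the update
procedure until no label changes (the iterates decrease pointwise, so the stable
labelling is the pointwise infimum of the iterates). -/
noncomputable def label (G : GCR PP PE) (s : (PP × PE) × Bool) : ℕ∞ :=
  ⨅ n : ℕ, (G.labelStep)^[n] G.labelInit s

/-! ### Length of the game -/

/-- The number of moves the Pursuer makes before the position first lies in `F`, in the
play determined by `σ` and `τ` (the Pursuer moves at odd time-steps, so has made
`(n+1)/2` moves by time-step `n`); `⊤` if the position never lies in `F`. -/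
noncomputable def captureMoves (G : GCR PP PE) (σ : PStrat G) (τ : EStrat G) : ℕ∞ :=
  ⨅ (n : ℕ) (_ : G.F (pos G σ τ n).1 (pos G σ τ n).2), (((n + 1) / 2 : ℕ) : ℕ∞)

/-- The length of the game under optimal play: the minimum over valid Pursuer strategies
of the maximum over valid Evader strategies of the number of Pursuer moves made before
the position first lies in `F`. -/
noncomputable def gameLength (G : GCR PP PE) : ℕ∞ :=
  ⨅ (σ : PStrat G) (_ : σ.Valid), ⨆ (τ : EStrat G) (_ : τ.Valid), G.captureMoves σ τ

/-- The quantity `ℓ(p,q)` from Corollary 1. -/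
noncomputable def ell (G : GCR PP PE) (p : PP) (q : PE) : ℕ∞ :=
  if G.Rel q p then ⨅ (j : ℕ) (_ : G.rel j q p), (j : ℕ∞)
  else 1 + ⨆ w ∈ G.AP p q, ⨅ (j : ℕ) (_ : G.rel j q w), (j : ℕ∞)

/-! ### Position independent games -/

/-- A game is position independent (with position digraphs given by out-neighbour maps
`GP` and `GE`) if, from any non-final position, the allowed moves of the Pursuer depend
only on the Pursuer's position and the allowed moves of the Evader depend only on the
Evader's position. -/
def PositionIndependent (G : GCR PP PE) (GP : PP → Set PP) (GE : PE → Set PE) : Prop :=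
  ∀ p q, ¬ G.F p q → G.AP p q = GP p ∧ G.AE p q = GE q

/-- A vertex `(p,q)` of the round summary digraph is removable with respect to a set `S`
of vertices. -/
def Removable (G : GCR PP PE) (GP : PP → Set PP) (GE : PE → Set PE)
    (v : PP × PE) (S : Set (PP × PE)) : Prop :=
  G.F v.1 v.2 ∨ ∀ x ∈ GE v.2, G.F v.1 x ∨ ∃ y ∈ GP v.1, (y, x) ∈ S

/-- A removable vertex ordering of the round summary digraph: a sequence of vertices in
which each element is removable with respect to the set of vertices preceding it, and
there is a Pursuer start position `p ∈ I_P` such that for all `q ∈ I_E(p)` either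
`(p,q) ∈ F` or the Pursuer has an allowed move `w` with `(w,q)` in the sequence. -/
def RemovableOrdering (G : GCR PP PE) (GP : PP → Set PP) (GE : PE → Set PE)
    (L : List (PP × PE)) : Prop :=
  (∀ i : Fin L.length, G.Removable GP GE (L.get i)
      {w | ∃ j : Fin L.length, (j : ℕ) < (i : ℕ) ∧ L.get j = w}) ∧
  ∃ p, G.IP p ∧ ∀ q, G.IE p q → G.F p q ∨ ∃ w ∈ GP p, (w, q) ∈ L


/-! ### Auxiliary lemmas for Theorem 1 -/

lemma rel_zero (G : GCR PP PE) (q : PE) (p : PP) : G.rel 0 q p ↔ G.F p q := by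
  rw [rel]

lemma rel_succ (G : GCR PP PE) (i : ℕ) (q : PE) (p : PP) :
    G.rel (i+1) q p ↔ (G.F p q ∨
      ∀ x ∈ G.AE p q, G.F p x ∨ ∃ w ∈ G.AP p x, ∃ j, ∃ _ : j < i + 1, G.rel j x w) := by
  rw [rel]

/-- If `¬ q ≼ w` and `(w,q) ∉ F`, the Evader has an escaping move. -/
lemma evader_escape [Fintype PE] (G : GCR PP PE) {w : PP} {q : PE}
    (h : ¬ G.Rel q w) (hF : ¬ G.F w q) :
    ∃ x ∈ G.AE w q, ¬ G.F w x ∧ ∀ w' ∈ G.AP w x, ¬ G.Rel x w' := by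
  by_contra hc
  push_neg at hc
  classical
  set f : PE → ℕ := fun x =>
    if hx : ∃ j, ∃ w' ∈ G.AP w x, G.rel j x w' then hx.choose else 0 with hf
  set N : ℕ := Finset.univ.sup f with hN
  apply h
  refine ⟨N + 1, ?_⟩
  rw [rel_succ]
  refine Or.inr (fun x hx => ?_)
  by_cases hFx : G.F w x
  · exact Or.inl hFx
  · obtain ⟨w', hw', j, hj⟩ := hc x hx hFx
    have hex : ∃ j, ∃ w' ∈ G.AP w x, G.rel j x w' := ⟨j, w', hw', hj⟩
    obtain ⟨w'', hw'', hr⟩ := hex.choose_spec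
    have hfx : f x = hex.choose := by simp [hf, dif_pos hex]
    have hle : f x ≤ N := Finset.le_sup (Finset.mem_univ x)
    exact Or.inr ⟨w'', hw'', hex.choose, ⟨by omega, hr⟩⟩

/-- The Pursuer's memoryless move: from a non-final position pick, if possible, an
allowed move `w` with `q ≼ w` of minimal rank, otherwise any allowed move. -/
noncomputable def pMove (G : GCR PP PE) (c : PP × PE) : PP :=
  if h : ∃ i, ∃ w ∈ G.AP c.1 c.2, G.rel i c.2 w then (Nat.find_spec h).choose
  else if h2 : ¬ G.F c.1 c.2 then (G.AP_nonempty c.1 c.2 h2).choose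
  else G.I_nonempty.choose

lemma pMove_eq (G : GCR PP PE) (c : PP × PE)
    (h : ∃ i, ∃ w ∈ G.AP c.1 c.2, G.rel i c.2 w) :
    G.pMove c = (Nat.find_spec h).choose := by
  rw [pMove, dif_pos h]

lemma pMove_spec (G : GCR PP PE) (c : PP × PE)
    (h : ∃ i, ∃ w ∈ G.AP c.1 c.2, G.rel i c.2 w) :
    G.pMove c ∈ G.AP c.1 c.2 ∧ G.rel (Nat.find h) c.2 (G.pMove c) := by
  rw [pMove_eq G c h]
  obtain ⟨hmem, hrel⟩ := (Nat.find_spec h).choose_spec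
  exact ⟨hmem, hrel⟩

lemma pMove_mem (G : GCR PP PE) (c : PP × PE) (hF : ¬ G.F c.1 c.2) :
    G.pMove c ∈ G.AP c.1 c.2 := by
  by_cases h : ∃ i, ∃ w ∈ G.AP c.1 c.2, G.rel i c.2 w
  · exact (G.pMove_spec c h).1
  · rw [pMove, dif_neg h, dif_pos hF]
    exact (G.AP_nonempty c.1 c.2 hF).choose_spec

/-- The Evader's memoryless move: from a non-final position pick, if possible, an
escaping move, otherwise any allowed move. -/
noncomputable def eMove (G : GCR PP PE) (c : PP × PE) : PE :=
  if h : ∃ x ∈ G.AE c.1 c.2, ¬ G.F c.1 x ∧ ∀ w' ∈ G.AP c.1 x, ¬ G.Rel x w' then h.choose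
  else if h2 : ¬ G.F c.1 c.2 then (G.AE_nonempty c.1 c.2 h2).choose
  else G.I_nonempty.choose_spec.choose

lemma eMove_mem (G : GCR PP PE) (c : PP × PE) (hF : ¬ G.F c.1 c.2) :
    G.eMove c ∈ G.AE c.1 c.2 := by
  by_cases h : ∃ x ∈ G.AE c.1 c.2, ¬ G.F c.1 x ∧ ∀ w' ∈ G.AP c.1 x, ¬ G.Rel x w'
  · rw [eMove, dif_pos h]
    exact h.choose_spec.1
  · rw [eMove, dif_neg h, dif_pos hF]
    exact (G.AE_nonempty c.1 c.2 hF).choose_spec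

lemma eMove_spec (G : GCR PP PE) (c : PP × PE)
    (h : ∃ x ∈ G.AE c.1 c.2, ¬ G.F c.1 x ∧ ∀ w' ∈ G.AP c.1 x, ¬ G.Rel x w') :
    G.eMove c ∈ G.AE c.1 c.2 ∧ ¬ G.F c.1 (G.eMove c) ∧
      ∀ w' ∈ G.AP c.1 (G.eMove c), ¬ G.Rel (G.eMove c) w' := by
  rw [eMove, dif_pos h]
  exact h.choose_spec

/-- The Evader's initial choice. -/
noncomputable def eInit (G : GCR PP PE) (p : PP) : PE :=
  if h : ∃ q, G.I p q ∧ ¬ G.F p q ∧ ∀ w ∈ G.AP p q, ¬ G.Rel q w then h.choose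
  else if h2 : ∃ q, G.I p q then h2.choose
  else G.I_nonempty.choose_spec.choose

lemma eInit_mem (G : GCR PP PE) (p : PP) (hp : G.IP p) : G.IE p (G.eInit p) := by
  by_cases h : ∃ q, G.I p q ∧ ¬ G.F p q ∧ ∀ w ∈ G.AP p q, ¬ G.Rel q w
  · rw [eInit, dif_pos h]
    exact h.choose_spec.1
  · have hp' : ∃ q, G.I p q := hp
    rw [eInit, dif_neg h, dif_pos hp']
    exact hp'.choose_spec

lemma eInit_spec (G : GCR PP PE) (p : PP)
    (h : ∃ q, G.I p q ∧ ¬ G.F p q ∧ ∀ w ∈ G.AP p q, ¬ G.Rel q w) :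
    G.I p (G.eInit p) ∧ ¬ G.F p (G.eInit p) ∧
      ∀ w ∈ G.AP p (G.eInit p), ¬ G.Rel (G.eInit p) w := by
  rw [eInit, dif_pos h]
  exact h.choose_spec

/-- The memoryless Pursuer strategy starting at `p`. -/
noncomputable def pStrat (G : GCR PP PE) (p : PP) : PStrat G where
  init := p
  move := fun l => match l with
    | [] => G.I_nonempty.choose
    | c :: _ => G.pMove c

/-- The memoryless Evader strategy. -/
noncomputable def eStrat (G : GCR PP PE) : EStrat G where
  init := G.eInit
  move := fun l => match l with
    | [] => G.I_nonempty.choose_spec.choose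
    | c :: _ => G.eMove c

lemma play_snd (G : GCR PP PE) (σ : PStrat G) (τ : EStrat G) (n : ℕ) :
    ∃ t, (play G σ τ n).2 = pos G σ τ n :: t := by
  cases n with
  | zero => exact ⟨[], rfl⟩
  | succ n => exact ⟨(play G σ τ n).2, rfl⟩

lemma pos_succ_even (G : GCR PP PE) (σ : PStrat G) (τ : EStrat G) (n : ℕ)
    (hn : n % 2 = 0) :
    pos G σ τ (n+1) = (σ.move (play G σ τ n).2, (pos G σ τ n).2) := by
  simp [pos, play, hn]

lemma pos_succ_odd (G : GCR PP PE) (σ : PStrat G) (τ : EStrat G) (n : ℕ)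
    (hn : n % 2 = 1) :
    pos G σ τ (n+1) = ((pos G σ τ n).1, τ.move (play G σ τ n).2) := by
  simp [pos, play, hn]

lemma pStrat_move (G : GCR PP PE) (p : PP) (τ : EStrat G) (n : ℕ) :
    (G.pStrat p).move (play G (G.pStrat p) τ n).2 = G.pMove (pos G (G.pStrat p) τ n) := by
  obtain ⟨t, ht⟩ := play_snd G (G.pStrat p) τ n
  rw [ht]; rfl

lemma eStrat_move (G : GCR PP PE) (σ : PStrat G) (n : ℕ) :
    (G.eStrat).move (play G σ G.eStrat n).2 = G.eMove (pos G σ G.eStrat n) := by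
  obtain ⟨t, ht⟩ := play_snd G σ G.eStrat n
  rw [ht]; rfl

/-- Main forward lemma: if from the current (even time) position either the position is
final or the Pursuer has an allowed move `w` with `q ≼_i w`, then the memoryless
Pursuer strategy captures. -/
lemma pursuer_capture (G : GCR PP PE) (p : PP) (τ : EStrat G) (hτ : τ.Valid) :
    ∀ i m, (G.F (pos G (G.pStrat p) τ (2*m)).1 (pos G (G.pStrat p) τ (2*m)).2 ∨
        ∃ w ∈ G.AP (pos G (G.pStrat p) τ (2*m)).1 (pos G (G.pStrat p) τ (2*m)).2,
          G.rel i (pos G (G.pStrat p) τ (2*m)).2 w) →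
      ∃ n, G.F (pos G (G.pStrat p) τ n).1 (pos G (G.pStrat p) τ n).2 := by
  set σ := G.pStrat p with hσ
  intro i
  induction i using Nat.strong_induction_on with
  | _ i IH =>
    intro m hm
    by_cases hF : G.F (pos G σ τ (2*m)).1 (pos G σ τ (2*m)).2
    · exact ⟨2*m, hF⟩
    rcases hm with hF' | ⟨w, hw, hrel⟩
    · exact ⟨2*m, hF'⟩
    have hex : ∃ j, ∃ w' ∈ G.AP (pos G σ τ (2*m)).1 (pos G σ τ (2*m)).2,
        G.rel j (pos G σ τ (2*m)).2 w' := ⟨i, w, hw, hrel⟩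
    obtain ⟨hmem, hrel0⟩ := G.pMove_spec (pos G σ τ (2*m)) hex
    have hfind : Nat.find hex ≤ i := Nat.find_le ⟨w, hw, hrel⟩
    have h2m : (2*m) % 2 = 0 := by omega
    have hpos1 : pos G σ τ (2*m+1) =
        (G.pMove (pos G σ τ (2*m)), (pos G σ τ (2*m)).2) := by
      rw [pos_succ_even G σ τ _ h2m, hσ, pStrat_move]
    by_cases hF1 : G.F (pos G σ τ (2*m+1)).1 (pos G σ τ (2*m+1)).2
    · exact ⟨2*m+1, hF1⟩
    rw [hpos1] at hF1
    cases hi0 : Nat.find hex with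
    | zero =>
      rw [hi0, rel_zero] at hrel0
      exact absurd hrel0 hF1
    | succ j =>
      rw [hi0, rel_succ] at hrel0
      rcases hrel0 with hF2 | hstep
      · exact absurd hF2 hF1
      -- the Evader moves at time 2m+2
      have h2m1 : (2*m+1) % 2 = 1 := by omega
      have hpos2 : pos G σ τ (2*m+2) =
          ((pos G σ τ (2*m+1)).1, τ.move (play G σ τ (2*m+1)).2) :=
        pos_succ_odd G σ τ _ h2m1
      set x := τ.move (play G σ τ (2*m+1)).2 with hx
      have hxmem : x ∈ G.AE (pos G σ τ (2*m+1)).1 (pos G σ τ (2*m+1)).2 := by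
        obtain ⟨t, ht⟩ := play_snd G σ τ (2*m+1)
        rw [hx, ht]
        exact hτ.2 t _ (by rw [hpos1]; exact hF1)
      rw [hpos1] at hxmem
      have hpos2' : pos G σ τ (2*m+2) = (G.pMove (pos G σ τ (2*m)), x) := by
        rw [hpos2, hpos1]
      rcases hstep x hxmem with hFx | ⟨w', hw', j', hj', hr'⟩
      · exact ⟨2*m+2, by rw [hpos2']; exact hFx⟩
      · have hj'i : j' < i := by omega
        have h22 : 2*(m+1) = 2*m+2 := by ring
        refine IH j' hj'i (m+1) ?_
        rw [h22, hpos2']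
        exact Or.inr ⟨w', hw', hr'⟩

/-- Main backward lemma: if from every allowed start the Evader can get to a safe
position, then the memoryless Evader strategy survives forever. -/
lemma evader_survive [Fintype PE] (G : GCR PP PE)
    (hcond : ∀ p, G.IP p → ∃ q, G.I p q ∧ ¬ G.F p q ∧ ∀ w ∈ G.AP p q, ¬ G.Rel q w)
    (σ : PStrat G) (hσ : σ.Valid) :
    ∀ n, ¬ G.F (pos G σ G.eStrat n).1 (pos G σ G.eStrat n).2 := by
  set τ := G.eStrat with hτ
  -- the invariant at even and odd times
  have key : ∀ k,
      (¬ G.F (pos G σ τ (2*k)).1 (pos G σ τ (2*k)).2 ∧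
        ∀ w ∈ G.AP (pos G σ τ (2*k)).1 (pos G σ τ (2*k)).2,
          ¬ G.Rel (pos G σ τ (2*k)).2 w) ∧
      ¬ G.Rel (pos G σ τ (2*k+1)).2 (pos G σ τ (2*k+1)).1 := by
    -- from the even invariant derive the odd invariant
    have step1 : ∀ k, (¬ G.F (pos G σ τ (2*k)).1 (pos G σ τ (2*k)).2 ∧
          ∀ w ∈ G.AP (pos G σ τ (2*k)).1 (pos G σ τ (2*k)).2,
            ¬ G.Rel (pos G σ τ (2*k)).2 w) →
        ¬ G.Rel (pos G σ τ (2*k+1)).2 (pos G σ τ (2*k+1)).1 := by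
      intro k ⟨hF, hsafe⟩
      have h2k : (2*k) % 2 = 0 := by omega
      have hpos1 : pos G σ τ (2*k+1) = (σ.move (play G σ τ (2*k)).2, (pos G σ τ (2*k)).2) :=
        pos_succ_even G σ τ _ h2k
      have hmem : σ.move (play G σ τ (2*k)).2 ∈
          G.AP (pos G σ τ (2*k)).1 (pos G σ τ (2*k)).2 := by
        obtain ⟨t, ht⟩ := play_snd G σ τ (2*k)
        rw [ht]
        exact hσ.2 t _ hF
      rw [hpos1]
      exact hsafe _ hmem
    intro k
    induction k with
    | zero =>
      have h0 : pos G σ τ 0 = (σ.init, G.eInit σ.init) := rfl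
      obtain ⟨hI, hF0, hsafe0⟩ := G.eInit_spec σ.init (hcond σ.init hσ.1)
      have heven : ¬ G.F (pos G σ τ 0).1 (pos G σ τ 0).2 ∧
          ∀ w ∈ G.AP (pos G σ τ 0).1 (pos G σ τ 0).2, ¬ G.Rel (pos G σ τ 0).2 w := by
        rw [h0]; exact ⟨hF0, hsafe0⟩
      exact ⟨heven, step1 0 heven⟩
    | succ k ih =>
      have hodd := ih.2
      -- at time 2k+1 the Evader is safe: ¬ Rel q w, so ¬ F w q and it can escape
      have hFodd : ¬ G.F (pos G σ τ (2*k+1)).1 (pos G σ τ (2*k+1)).2 := by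
        intro hcontra
        exact hodd ⟨0, (rel_zero G _ _).mpr hcontra⟩
      have hesc := G.evader_escape hodd hFodd
      have h2k1 : (2*k+1) % 2 = 1 := by omega
      have hpos2 : pos G σ τ (2*k+2) =
          ((pos G σ τ (2*k+1)).1, τ.move (play G σ τ (2*k+1)).2) :=
        pos_succ_odd G σ τ _ h2k1
      have hmove : τ.move (play G σ τ (2*k+1)).2 = G.eMove (pos G σ τ (2*k+1)) := by
        rw [hτ]; exact eStrat_move G σ (2*k+1)
      obtain ⟨hxmem, hxF, hxsafe⟩ := G.eMove_spec (pos G σ τ (2*k+1)) hesc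
      have h22 : 2*(k+1) = 2*k+2 := by ring
      have heven : ¬ G.F (pos G σ τ (2*(k+1))).1 (pos G σ τ (2*(k+1))).2 ∧
          ∀ w ∈ G.AP (pos G σ τ (2*(k+1))).1 (pos G σ τ (2*(k+1))).2,
            ¬ G.Rel (pos G σ τ (2*(k+1))).2 w := by
        rw [h22, hpos2, hmove]
        exact ⟨hxF, hxsafe⟩
      exact ⟨heven, step1 (k+1) heven⟩
  intro n
  rcases Nat.even_or_odd n with ⟨k, hk⟩ | ⟨k, hk⟩
  · have := (key k).1.1
    rwa [show 2*k = n by omega] at this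
  · have hodd := (key k).2
    rw [show 2*k+1 = n by omega] at hodd
    intro hcontra
    exact hodd ⟨0, (rel_zero G _ _).mpr hcontra⟩

/-- Theorem 1: the Pursuer has a winning strategy if and only if there is a start
position `p ∈ I_P` such that for every `q ∈ I_E(p)` either `(p,q) ∈ F` or there is
`w ∈ A_P(p,q)` with `q ≼ w`. -/
theorem pursuerWins_iff [Fintype PP] [Fintype PE] (G : GCR PP PE) :
    G.PursuerWins ↔
      ∃ p, G.IP p ∧ ∀ q, G.IE p q → (G.F p q ∨ ∃ w ∈ G.AP p q, G.Rel q w) := by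
  constructor
  · -- forward: if the Pursuer wins, the condition holds
    intro hwin
    by_contra hc
    push_neg at hc
    have hcond : ∀ p, G.IP p → ∃ q, G.I p q ∧ ¬ G.F p q ∧ ∀ w ∈ G.AP p q, ¬ G.Rel q w := by
      intro p hp
      obtain ⟨q, hq, hFq, hsafe⟩ := hc p hp
      exact ⟨q, hq, hFq, hsafe⟩
    -- the memoryless Evader strategy is valid
    have hτ : (G.eStrat).Valid := by
      constructor
      · intro p hp
        exact G.eInit_mem p hp
      · intro h c hF
        have : (G.eStrat).move (c :: h) = G.eMove c := rfl
        rw [this]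
        exact G.eMove_mem c hF
    obtain ⟨σ, hσ, hwinσ⟩ := hwin
    obtain ⟨n, hn⟩ := hwinσ G.eStrat hτ
    exact G.evader_survive hcond σ hσ n hn
  · -- backward: the condition gives a winning strategy
    rintro ⟨p, hp, hcond⟩
    refine ⟨G.pStrat p, ⟨hp, ?_⟩, ?_⟩
    · intro h c hF
      have : (G.pStrat p).move (c :: h) = G.pMove c := rfl
      rw [this]
      exact G.pMove_mem c hF
    · intro τ hτ
      have hq : G.IE p (τ.init p) := hτ.1 p hp
      have h0 : pos G (G.pStrat p) τ 0 = (p, τ.init p) := rfl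
      rcases hcond (τ.init p) hq with hF | ⟨w, hw, i, hrel⟩
      · exact ⟨0, by rw [h0]; exact hF⟩
      · refine G.pursuer_capture p τ hτ i 0 ?_
        rw [show 2*0 = 0 by ring, h0]
        exact Or.inr ⟨w, hw, hrel⟩

end GCR
end

section
/- In a generalized Cops and Robbers game, if it is the Evader's turn to move at position (p_P, q_E) and q_E ≼_i p_P, then the Pursuer has a strategy that guarantees the position enters F after the Pursuer makes at most i more moves. -/
open Classical

namespace GCR

variable {PP PE : Type*}

/-! ### Auxiliary definitions for the proof -/

/-- The set of `j` such that the Pursuer has a move from `c` reaching `w` with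
`c.2 ≼_j w`. -/
def Tset (G : GCR PP PE) (c : PP × PE) : Set ℕ :=
  {j | ∃ w ∈ G.AP c.1 c.2, G.rel j c.2 w}

/-- Greedy Pursuer move: pick a move minimizing the `rel` index if possible. -/
noncomputable def pick (G : GCR PP PE) (c : PP × PE) : PP :=
  if h : (G.Tset c).Nonempty then (Nat.sInf_mem h).choose
  else if h2 : (G.AP c.1 c.2).Nonempty then h2.choose
  else c.1

lemma pick_mem (G : GCR PP PE) (c : PP × PE) (hF : ¬ G.F c.1 c.2) :
    G.pick c ∈ G.AP c.1 c.2 := by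
  unfold pick
  split_ifs with h h2
  · exact (Nat.sInf_mem h).choose_spec.1
  · exact h2.choose_spec
  · exact absurd (G.AP_nonempty c.1 c.2 hF) h2

lemma pick_rel (G : GCR PP PE) {c : PP × PE} {w : PP} {j : ℕ}
    (hw : w ∈ G.AP c.1 c.2) (hrel : G.rel j c.2 w) :
    ∃ j' ≤ j, G.rel j' c.2 (G.pick c) := by
  have hne : (G.Tset c).Nonempty := ⟨j, w, hw, hrel⟩
  refine ⟨sInf (G.Tset c), Nat.sInf_le ⟨w, hw, hrel⟩, ?_⟩
  unfold pick
  rw [dif_pos hne]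
  exact (Nat.sInf_mem hne).choose_spec.2

lemma playFrom_snd (G : GCR PP PE) (σ : PStrat G) (τ : EStrat G)
    (s : PP × PE) (b : Bool) :
    ∀ n, ∃ t, (playFrom G σ τ s b n).2 = (playFrom G σ τ s b n).1 :: t
  | 0 => ⟨[], rfl⟩
  | (n+1) => ⟨(playFrom G σ τ s b n).2, rfl⟩

lemma playFrom_shift (G : GCR PP PE) (σ : PStrat G)
    (hσ : ∀ c h, σ.move (c :: h) = σ.move [c])
    (τ τ₂ : EStrat G) (suf : List (PP × PE))
    (hτ₂ : ∀ l, τ₂.move l = τ.move (l ++ suf))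
    (s0 s : PP × PE)
    (h2 : playFrom G σ τ s0 false 2 = (s, s :: suf)) :
    ∀ n, playFrom G σ τ s0 false (n + 2) =
      ((playFrom G σ τ₂ s false n).1, (playFrom G σ τ₂ s false n).2 ++ suf) := by
  intro n
  induction n with
  | zero => simpa [playFrom] using h2
  | succ n ih =>
    obtain ⟨t, ht⟩ := playFrom_snd G σ τ₂ s false n
    have hpar : (n + 2) % 2 = n % 2 := Nat.add_mod_right n 2
    show playFrom G σ τ s0 false ((n + 2) + 1) = _
    conv_lhs => rw [playFrom]
    conv_rhs => rw [playFrom]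
    rw [ih]
    have hmove : σ.move ((playFrom G σ τ₂ s false n).2 ++ suf)
        = σ.move (playFrom G σ τ₂ s false n).2 := by
      rw [ht]
      show σ.move ((playFrom G σ τ₂ s false n).1 :: (t ++ suf)) = _
      rw [hσ _ (t ++ suf)]
      exact (hσ _ t).symm
    by_cases hn : n % 2 = 0
    · simp [hpar, hn, hτ₂]
    · simp [hpar, hn, hmove]

/-- If it is the Evader's turn to move at position `(p,q)` and `q ≼_i p`, then the
Pursuer has a strategy guaranteeing that the position enters `F` after the Pursuer makes
at most `i` more moves (the Evader moves at the odd time-steps and the Pursuer at the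
even time-steps, so by time-step `n` the Pursuer has made `n/2` moves). -/
theorem pursuer_forces_of_rel [Fintype PP] [Fintype PE] (G : GCR PP PE)
    (i : ℕ) (p : PP) (q : PE) (h : G.rel i q p) :
    ∃ σ : PStrat G, σ.MovesValid ∧ ∀ τ : EStrat G, τ.MovesValid →
      ∃ n, n ≤ 2 * i + 1 ∧
        G.F (posFrom G σ τ (p, q) false n).1 (posFrom G σ τ (p, q) false n).2 := by
  classical
  let σ : PStrat G := ⟨p, fun l => G.pick (l.headD (p, q))⟩
  have hσmove : ∀ (c : PP × PE) (h : List (PP × PE)), σ.move (c :: h) = G.pick c :=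
    fun c h => rfl
  have hσ : ∀ (c : PP × PE) (h : List (PP × PE)), σ.move (c :: h) = σ.move [c] :=
    fun c h => rfl
  have hσvalid : σ.MovesValid := by
    intro h c hc
    rw [hσmove]
    exact G.pick_mem c hc
  refine ⟨σ, hσvalid, ?_⟩
  have main : ∀ i : ℕ, ∀ p' : PP, ∀ q' : PE, G.rel i q' p' →
      ∀ τ : EStrat G, τ.MovesValid →
      ∃ n, n ≤ 2 * i + 1 ∧
        G.F (posFrom G σ τ (p', q') false n).1 (posFrom G σ τ (p', q') false n).2 := by
    intro i
    induction i using Nat.strong_induction_on with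
    | _ i IH =>
      intro p' q' h' τ hτ
      by_cases hF : G.F p' q'
      · exact ⟨0, by omega, by simpa [posFrom, playFrom] using hF⟩
      · match i with
        | 0 =>
          rw [rel] at h'
          exact absurd h' hF
        | (k+1) =>
          rw [rel] at h'
          rcases h' with h' | h'
          · exact absurd h' hF
          set x := τ.move [(p', q')] with hxdef
          have hx : x ∈ G.AE p' q' := hτ [] (p', q') hF
          have hpos1 : posFrom G σ τ (p', q') false 1 = (p', x) := by
            simp [posFrom, playFrom, ← hxdef]
          by_cases hFx : G.F p' x
          · exact ⟨1, by omega, by rw [hpos1]; exact hFx⟩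
          · obtain ⟨w, hw, j, hj, hrel⟩ := (h' x hx).resolve_left hFx
            obtain ⟨j', hj', hrel'⟩ := G.pick_rel (c := (p', x)) hw hrel
            set w' := G.pick (p', x) with hw'def
            have h2 : playFrom G σ τ (p', q') false 2
                = ((w', x), [(w', x), (p', x), (p', q')]) := by
              simp [playFrom, hσmove, hw'def, ← hxdef]
            let τ₂ : EStrat G := ⟨τ.init, fun l => τ.move (l ++ [(p', x), (p', q')])⟩
            have hτ₂def : ∀ l, τ₂.move l = τ.move (l ++ [(p', x), (p', q')]) :=
              fun l => rfl
            have hτ₂ : τ₂.MovesValid := by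
              intro h c hc
              rw [hτ₂def]
              exact hτ (h ++ [(p', x), (p', q')]) c hc
            obtain ⟨n, hn, hFn⟩ := IH j' (by omega) w' x hrel' τ₂ hτ₂
            refine ⟨n + 2, by omega, ?_⟩
            have hs := playFrom_shift G σ hσ τ τ₂ [(p', x), (p', q')] hτ₂def
              (p', q') (w', x) h2 n
            have hpos : posFrom G σ τ (p', q') false (n + 2)
                = posFrom G σ τ₂ (w', x) false n := by
              unfold posFrom
              rw [hs]
            rw [hpos]
            exact hFn
  exact fun τ hτ => main i p q h τ hτ

end GCR
end

section
/- Let G be a generalized Cops and Robbers game. If q_E ≼_n p_P for some natural number n, then the stable label of the state ((p_P, q_E), E) in the state digraph D_G is a natural number (i.e., is finite). -/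
open Classical

namespace GCR

variable {PP PE : Type*}

lemma labelStep_mono (G : GCR PP PE) : Monotone G.labelStep := by
  intro f g hfg s
  simp only [labelStep]
  split_ifs
  · exact le_refl _
  · gcongr with w hw
    exact hfg _
  · gcongr with x hx
    exact hfg _

lemma labelStep_le_init (G : GCR PP PE) : G.labelStep G.labelInit ≤ G.labelInit := by
  intro s
  unfold labelStep labelInit
  split_ifs <;> simp

lemma iter_antitone (G : GCR PP PE) :
    Antitone (fun m => (G.labelStep)^[m] G.labelInit) := by
  apply antitone_nat_of_succ_le
  intro m
  rw [Function.iterate_succ_apply]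
  exact (G.labelStep_mono.iterate m) G.labelStep_le_init

lemma iter_final (G : GCR PP PE) (s : (PP × PE) × Bool) (hF : G.F s.1.1 s.1.2) (m : ℕ) :
    (G.labelStep)^[m] G.labelInit s = 0 := by
  cases m with
  | zero => simp [labelInit, hF]
  | succ m => rw [Function.iterate_succ_apply']; simp [labelStep, hF]

lemma iter_le_of_rel (G : GCR PP PE) :
    ∀ n p q, G.rel n q p →
      (G.labelStep)^[2*n] G.labelInit ((p, q), false) ≤ ((2*n : ℕ) : ℕ∞) := by
  intro n
  induction n using Nat.strong_induction_on with
  | _ n ih =>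
    intro p q h
    match n, h with
    | 0, h =>
      rw [rel] at h
      rw [G.iter_final _ h]
      exact zero_le
    | (n+1), h =>
      rw [rel] at h
      rcases h with hF | h
      · rw [G.iter_final _ hF]; exact zero_le
      by_cases hF : G.F p q
      · rw [G.iter_final _ hF]; exact zero_le
      have h2 : 2 * (n + 1) = (2 * n + 1) + 1 := by ring
      rw [h2, Function.iterate_succ_apply']
      show G.labelStep _ ((p, q), false) ≤ _
      rw [labelStep]
      simp only [hF, if_false, if_neg, Bool.false_eq_true]
      have hsup : (⨆ x ∈ G.AE p q,
          (G.labelStep)^[2*n+1] G.labelInit ((p, x), true)) ≤ ((2*n+1 : ℕ) : ℕ∞) := by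
        refine iSup₂_le fun x hx => ?_
        rcases h x hx with hFx | ⟨w, hw, j, hj, hrel⟩
        · rw [G.iter_final ((p, x), true) hFx]; exact zero_le
        by_cases hFx : G.F p x
        · rw [G.iter_final ((p, x), true) hFx]; exact zero_le
        rw [Function.iterate_succ_apply']
        show G.labelStep _ ((p, x), true) ≤ _
        rw [labelStep]
        simp only [hFx, if_false, if_pos, if_true]
        have hinf : (⨅ w' ∈ G.AP p x,
            (G.labelStep)^[2*n] G.labelInit ((w', x), false)) ≤ ((2*n : ℕ) : ℕ∞) := by
          refine le_trans (biInf_le _ hw) ?_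
          refine le_trans (G.iter_antitone (by omega : 2*j ≤ 2*n) ((w, x), false)) ?_
          refine le_trans (ih j (by omega) w x hrel) ?_
          exact Nat.cast_le.mpr (by omega)
        calc 1 + (⨅ w' ∈ G.AP p x, (G.labelStep)^[2*n] G.labelInit ((w', x), false))
            ≤ 1 + ((2*n : ℕ) : ℕ∞) := add_le_add (le_refl 1) hinf
          _ = ((2*n+1 : ℕ) : ℕ∞) := by push_cast; ring
      calc 1 + (⨆ x ∈ G.AE p q, (G.labelStep)^[2*n+1] G.labelInit ((p, x), true))
          ≤ 1 + ((2*n+1 : ℕ) : ℕ∞) := add_le_add (le_refl 1) hsup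
        _ = ((2*(n+1) : ℕ) : ℕ∞) := by push_cast; ring

/-- If `q ≼_n p` for some natural number `n`, then the stable label of the
Evader-to-move state `((p,q),E)` in the state digraph is finite. -/
theorem label_finite_of_rel [Fintype PP] [Fintype PE] (G : GCR PP PE)
    (p : PP) (q : PE) (n : ℕ) (h : G.rel n q p) :
    ∃ k : ℕ, G.label ((p, q), false) = (k : ℕ∞) := by
  have hle : G.label ((p, q), false) ≤ ((2*n : ℕ) : ℕ∞) :=
    le_trans (iInf_le _ (2*n)) (G.iter_le_of_rel n p q h)
  have hne : G.label ((p, q), false) ≠ ⊤ :=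
    ne_top_of_le_ne_top (WithTop.natCast_ne_top _) hle
  obtain ⟨k, hk⟩ := WithTop.ne_top_iff_exists.mp hne
  exact ⟨k, hk.symm⟩

end GCR
end

section
/- In a generalized Cops and Robbers game, for every state s of the state digraph D_G whose stable label is a finite number k, assuming both sides play optimally from state s, the game ends (the position first belongs to F) after exactly k moves; that is, the player to move at s can force the position into F within k moves, and the opposing player can ensure the position does not enter F in fewer than k moves. -/
open Classical

namespace GCR

variable {PP PE : Type*}

/-! ### Auxiliary lemmas for the main theorem -/

section Aux

lemma labelStep_mono_s9 (G : GCR PP PE) {f g : (PP × PE) × Bool → ℕ∞}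
    (hfg : ∀ t, f t ≤ g t) (t : (PP × PE) × Bool) : G.labelStep f t ≤ G.labelStep g t := by
  unfold labelStep
  split_ifs with h1 h2
  · exact le_rfl
  · exact add_le_add_right (iInf_mono fun w => iInf_mono fun _ => hfg _) 1
  · exact add_le_add_right (iSup_mono fun x => iSup_mono fun _ => hfg _) 1

lemma iter_succ_le (G : GCR PP PE) (n : ℕ) :
    ∀ t, (G.labelStep)^[n+1] G.labelInit t ≤ (G.labelStep)^[n] G.labelInit t := by
  induction n with
  | zero =>
    intro t
    simp only [Function.iterate_one, Function.iterate_zero, id_eq]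
    by_cases hF : G.F t.1.1 t.1.2
    · simp [labelStep, labelInit, hF]
    · simp [labelInit, hF]
  | succ n ih =>
    intro t
    calc (G.labelStep)^[n+1+1] G.labelInit t
        = G.labelStep ((G.labelStep)^[n+1] G.labelInit) t :=
          congrFun (Function.iterate_succ_apply' _ _ _) t
      _ ≤ G.labelStep ((G.labelStep)^[n] G.labelInit) t := G.labelStep_mono_s9 ih t
      _ = (G.labelStep)^[n+1] G.labelInit t :=
          (congrFun (Function.iterate_succ_apply' _ _ _) t).symm

lemma iter_anti (G : GCR PP PE) (t : (PP × PE) × Bool) :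
    Antitone (fun n => (G.labelStep)^[n] G.labelInit t) :=
  antitone_nat_of_succ_le fun n => G.iter_succ_le n t

lemma exists_iter_eq_label (G : GCR PP PE) (t : (PP × PE) × Bool) :
    ∃ N, ∀ n ≥ N, (G.labelStep)^[n] G.labelInit t = G.label t := by
  set f : ℕ → ℕ∞ := fun n => (G.labelStep)^[n] G.labelInit t with hf
  obtain ⟨a, ⟨N, rfl⟩, hmin⟩ :=
    (wellFounded_lt : WellFounded ((· < ·) : ℕ∞ → ℕ∞ → Prop)).has_min
      (Set.range f) (Set.range_nonempty f)
  have hlab : G.label t = f N := by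
    refine le_antisymm (iInf_le _ N) (le_iInf fun m => ?_)
    exact not_lt.1 (hmin (f m) ⟨m, rfl⟩)
  exact ⟨N, fun n hn =>
    le_antisymm (by rw [hlab]; exact G.iter_anti t hn) (iInf_le _ n)⟩

lemma label_isFixed (G : GCR PP PE) [Fintype PP] [Fintype PE] (t : (PP × PE) × Bool) :
    G.labelStep G.label t = G.label t := by
  classical
  set Ns : (PP × PE) × Bool → ℕ := fun u => (G.exists_iter_eq_label u).choose with hNs
  set N : ℕ := Finset.univ.sup Ns with hN
  have hstab : ∀ u, (G.labelStep)^[N] G.labelInit u = G.label u := fun u =>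
    (G.exists_iter_eq_label u).choose_spec N
      (Finset.le_sup (f := Ns) (Finset.mem_univ u))
  have hstab1 : (G.labelStep)^[N+1] G.labelInit t = G.label t :=
    (G.exists_iter_eq_label t).choose_spec (N+1)
      (le_trans (Finset.le_sup (f := Ns) (Finset.mem_univ t)) (Nat.le_succ N))
  calc G.labelStep G.label t
      = G.labelStep ((G.labelStep)^[N] G.labelInit) t := by
        rw [funext hstab]
    _ = (G.labelStep)^[N+1] G.labelInit t := by
        rw [Function.iterate_succ_apply']
    _ = G.label t := hstab1

lemma label_final (G : GCR PP PE) {t : (PP × PE) × Bool} (h : G.F t.1.1 t.1.2) :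
    G.label t = 0 := by
  refine le_antisymm (le_trans (iInf_le _ 0) ?_) zero_le
  simp [labelInit, h]

lemma label_P (G : GCR PP PE) [Fintype PP] [Fintype PE] (c : PP × PE) (h : ¬ G.F c.1 c.2) :
    G.label (c, true) = 1 + ⨅ w ∈ G.AP c.1 c.2, G.label ((w, c.2), false) := by
  conv_lhs => rw [← G.label_isFixed (c, true)]
  unfold labelStep
  simp [h]

lemma label_E (G : GCR PP PE) [Fintype PP] [Fintype PE] (c : PP × PE) (h : ¬ G.F c.1 c.2) :
    G.label (c, false) = 1 + ⨆ x ∈ G.AE c.1 c.2, G.label ((c.1, x), true) := by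
  conv_lhs => rw [← G.label_isFixed (c, false)]
  unfold labelStep
  simp [h]

lemma one_le_label (G : GCR PP PE) [Fintype PP] [Fintype PE] (c : PP × PE) (b : Bool)
    (h : ¬ G.F c.1 c.2) : 1 ≤ G.label (c, b) := by
  cases b
  · rw [G.label_E c h]; exact le_self_add
  · rw [G.label_P c h]; exact le_self_add

lemma F_of_label_eq_zero (G : GCR PP PE) [Fintype PP] [Fintype PE] {c : PP × PE} {b : Bool}
    (h : G.label (c, b) = 0) : G.F c.1 c.2 := by
  by_contra hF
  have := G.one_le_label c b hF
  rw [h] at this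
  simp at this

lemma exists_min_AP (G : GCR PP PE) [Fintype PP] [Fintype PE] {p : PP} {q : PE}
    (h : ¬ G.F p q) :
    ∃ w, w ∈ G.AP p q ∧ ∀ w' ∈ G.AP p q,
      G.label ((w, q), false) ≤ G.label ((w', q), false) := by
  obtain ⟨w, hw, hmin⟩ := Set.exists_min_image (G.AP p q)
    (fun w => G.label ((w, q), false)) (Set.toFinite _) (G.AP_nonempty p q h)
  exact ⟨w, hw, hmin⟩

lemma exists_max_AE (G : GCR PP PE) [Fintype PP] [Fintype PE] {p : PP} {q : PE}
    (h : ¬ G.F p q) :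
    ∃ x, x ∈ G.AE p q ∧ ∀ x' ∈ G.AE p q,
      G.label ((p, x'), true) ≤ G.label ((p, x), true) := by
  obtain ⟨x, hx, hmax⟩ := Set.exists_max_image (G.AE p q)
    (fun x => G.label ((p, x), true)) (Set.toFinite _) (G.AE_nonempty p q h)
  exact ⟨x, hx, hmax⟩

/-- The greedy Pursuer strategy: always move to minimize the label. -/
noncomputable def greedyP (G : GCR PP PE) [Fintype PP] [Fintype PE] (d : PP) : PStrat G where
  init := d
  move := fun h => match h with
    | [] => d
    | c :: _ => if hc : G.F c.1 c.2 then c.1 else (G.exists_min_AP hc).choose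

/-- The greedy Evader strategy: always move to maximize the label. -/
noncomputable def greedyE (G : GCR PP PE) [Fintype PP] [Fintype PE] (d : PE) : EStrat G where
  init := fun _ => d
  move := fun h => match h with
    | [] => d
    | c :: _ => if hc : G.F c.1 c.2 then c.2 else (G.exists_max_AE hc).choose

lemma greedyP_move_eq (G : GCR PP PE) [Fintype PP] [Fintype PE] (d : PP)
    (t : List (PP × PE)) {c : PP × PE} (hc : ¬ G.F c.1 c.2) :
    (G.greedyP d).move (c :: t) = (G.exists_min_AP hc).choose := by
  simp only [greedyP]
  rw [dif_neg hc]

lemma greedyE_move_eq (G : GCR PP PE) [Fintype PP] [Fintype PE] (d : PE)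
    (t : List (PP × PE)) {c : PP × PE} (hc : ¬ G.F c.1 c.2) :
    (G.greedyE d).move (c :: t) = (G.exists_max_AE hc).choose := by
  simp only [greedyE]
  rw [dif_neg hc]

lemma greedyP_movesValid (G : GCR PP PE) [Fintype PP] [Fintype PE] (d : PP) :
    (G.greedyP d).MovesValid := by
  intro h c hc
  rw [G.greedyP_move_eq d h hc]
  exact (G.exists_min_AP hc).choose_spec.1

lemma greedyE_movesValid (G : GCR PP PE) [Fintype PP] [Fintype PE] (d : PE) :
    (G.greedyE d).MovesValid := by
  intro h c hc
  rw [G.greedyE_move_eq d h hc]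
  exact (G.exists_max_AE hc).choose_spec.1

lemma playFrom_snd_eq (G : GCR PP PE) (σ : PStrat G) (τ : EStrat G)
    (start : PP × PE) (b : Bool) (n : ℕ) :
    ∃ t, (playFrom G σ τ start b n).2 = (playFrom G σ τ start b n).1 :: t := by
  cases n <;> exact ⟨_, rfl⟩

lemma posFrom_succ (G : GCR PP PE) (σ : PStrat G) (τ : EStrat G)
    (start : PP × PE) (b : Bool) (n : ℕ) :
    posFrom G σ τ start b (n+1) =
      if (decide (n % 2 = 0)) == b
        then (σ.move (playFrom G σ τ start b n).2, (posFrom G σ τ start b n).2)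
        else ((posFrom G σ τ start b n).1, τ.move (playFrom G σ τ start b n).2) := by
  cases h : (decide (n % 2 = 0)) == b <;> simp [posFrom, playFrom, h]

lemma turn_flip (n : ℕ) (b : Bool) :
    (decide ((n+1) % 2 = 0) == b) = !(decide (n % 2 = 0) == b) := by
  have h1 : (decide ((n+1) % 2 = 0)) = decide (¬ (n % 2 = 0)) := by
    apply decide_eq_decide.mpr; omega
  rw [h1, decide_not]
  generalize decide (n % 2 = 0) = a
  cases a <;> cases b <;> rfl

lemma pursuer_step (G : GCR PP PE) [Fintype PP] [Fintype PE] (d : PP)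
    (τ : EStrat G) (hτ : τ.MovesValid) (start : PP × PE) (b : Bool) (n : ℕ)
    (hF : ¬ G.F (posFrom G (G.greedyP d) τ start b n).1
      (posFrom G (G.greedyP d) τ start b n).2) :
    G.label (posFrom G (G.greedyP d) τ start b (n+1), (decide ((n+1) % 2 = 0) == b)) + 1
      ≤ G.label (posFrom G (G.greedyP d) τ start b n, (decide (n % 2 = 0) == b)) := by
  set σ := G.greedyP d with hσ
  set c := posFrom G σ τ start b n with hc
  obtain ⟨t, ht⟩ := playFrom_snd_eq G σ τ start b n
  have hhist : (playFrom G σ τ start b n).2 = c :: t := ht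
  rw [posFrom_succ, hhist, turn_flip, ← hc]
  cases hturn : (decide (n % 2 = 0) == b)
  · -- Evader to move at step n
    simp only [hturn, Bool.not_false, if_neg (by simp : ¬ (false = true))]
    rw [G.label_E c hF, add_comm]
    exact add_le_add_right
      (le_iSup₂ (f := fun x (_ : x ∈ G.AE c.1 c.2) => G.label ((c.1, x), true))
        (τ.move (c :: t)) (hτ t c hF)) (1 : ℕ∞)
  · -- Pursuer to move at step n
    simp only [hturn, Bool.not_true, if_pos rfl]
    rw [G.label_P c hF, add_comm, G.greedyP_move_eq d t hF]
    refine add_le_add_right (le_iInf₂ fun w' hw' => ?_) 1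
    exact (G.exists_min_AP hF).choose_spec.2 w' hw'

lemma evader_step (G : GCR PP PE) [Fintype PP] [Fintype PE] (d : PE)
    (σ : PStrat G) (hσ : σ.MovesValid) (start : PP × PE) (b : Bool) (n : ℕ)
    (hF : ¬ G.F (posFrom G σ (G.greedyE d) start b n).1
      (posFrom G σ (G.greedyE d) start b n).2) :
    G.label (posFrom G σ (G.greedyE d) start b n, (decide (n % 2 = 0) == b))
      ≤ G.label (posFrom G σ (G.greedyE d) start b (n+1),
          (decide ((n+1) % 2 = 0) == b)) + 1 := by
  set τ := G.greedyE d with hτ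
  set c := posFrom G σ τ start b n with hc
  obtain ⟨t, ht⟩ := playFrom_snd_eq G σ τ start b n
  have hhist : (playFrom G σ τ start b n).2 = c :: t := ht
  rw [posFrom_succ, hhist, turn_flip, ← hc]
  cases hturn : (decide (n % 2 = 0) == b)
  · -- Evader to move at step n
    simp only [hturn, Bool.not_false, if_neg (by simp : ¬ (false = true))]
    rw [G.label_E c hF, add_comm _ (1 : ℕ∞), G.greedyE_move_eq d t hF]
    refine add_le_add_right (iSup₂_le fun x' hx' => ?_) 1
    exact (G.exists_max_AE hF).choose_spec.2 x' hx'
  · -- Pursuer to move at step n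
    simp only [hturn, Bool.not_true, if_pos rfl]
    rw [G.label_P c hF, add_comm _ (1 : ℕ∞)]
    exact add_le_add_right
      (iInf₂_le (f := fun w (_ : w ∈ G.AP c.1 c.2) => G.label ((w, c.2), false))
        (σ.move (c :: t)) (hσ t c hF)) (1 : ℕ∞)

end Aux

/-- If the stable label of a state `s` is a finite number `k`, then assuming both sides
play optimally from `s` the game ends (the position first belongs to `F`) after exactly
`k` single moves: the Pursuer can force the position into `F` within `k` moves, and the
Evader can ensure the position does not enter `F` in fewer than `k` moves. -/
theorem game_ends_in_label_moves [Fintype PP] [Fintype PE] (G : GCR PP PE)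
    (s : (PP × PE) × Bool) (k : ℕ) (h : G.label s = (k : ℕ∞)) :
    (∃ σ : PStrat G, σ.MovesValid ∧ ∀ τ : EStrat G, τ.MovesValid →
        ∃ n, n ≤ k ∧ G.F (posFrom G σ τ s.1 s.2 n).1 (posFrom G σ τ s.1 s.2 n).2) ∧
    (∃ τ : EStrat G, τ.MovesValid ∧ ∀ σ : PStrat G, σ.MovesValid →
        ∀ n, n < k → ¬ G.F (posFrom G σ τ s.1 s.2 n).1 (posFrom G σ τ s.1 s.2 n).2) := by
  obtain ⟨c₀, b₀⟩ := s
  simp only at h ⊢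
  constructor
  · -- Pursuer can force capture within k moves
    refine ⟨G.greedyP c₀.1, G.greedyP_movesValid c₀.1, fun τ hτ => ?_⟩
    by_contra hcon
    push_neg at hcon
    set σ := G.greedyP c₀.1 with hσdef
    have st0 : ((posFrom G σ τ c₀ b₀ 0, (decide (0 % 2 = 0) == b₀)) : (PP × PE) × Bool)
        = (c₀, b₀) := by cases b₀ <;> rfl
    have main : ∀ n, n ≤ k →
        G.label (posFrom G σ τ c₀ b₀ n, (decide (n % 2 = 0) == b₀)) + n ≤ (k : ℕ∞) := by
      intro n
      induction n with
      | zero =>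
        intro _
        rw [st0, h]
        simp
      | succ n ih =>
        intro hnk
        have hn : n ≤ k := Nat.le_of_succ_le hnk
        have ihn := ih hn
        have hstep := G.pursuer_step c₀.1 τ hτ c₀ b₀ n (hcon n hn)
        calc G.label (posFrom G σ τ c₀ b₀ (n+1), (decide ((n+1) % 2 = 0) == b₀)) + ((n+1 : ℕ) : ℕ∞)
            = (G.label (posFrom G σ τ c₀ b₀ (n+1), (decide ((n+1) % 2 = 0) == b₀)) + 1) + (n : ℕ∞) := by
              push_cast; ring
          _ ≤ G.label (posFrom G σ τ c₀ b₀ n, (decide (n % 2 = 0) == b₀)) + (n : ℕ∞) :=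
              add_le_add_left hstep _
          _ ≤ (k : ℕ∞) := ihn
    have hk := main k le_rfl
    have h0 : G.label (posFrom G σ τ c₀ b₀ k, (decide (k % 2 = 0) == b₀)) = 0 := by
      rcases eq_or_ne (G.label (posFrom G σ τ c₀ b₀ k, (decide (k % 2 = 0) == b₀))) ⊤ with hT | hT
      · rw [hT, top_add, top_le_iff] at hk
        exact absurd hk (by simp)
      · lift G.label (posFrom G σ τ c₀ b₀ k, (decide (k % 2 = 0) == b₀)) to ℕ using hT with m hm
        have hmk : m + k ≤ k := by exact_mod_cast hk
        have : m = 0 := by omega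
        exact_mod_cast this
    exact hcon k le_rfl (G.F_of_label_eq_zero h0)
  · -- Evader can avoid capture for fewer than k moves
    refine ⟨G.greedyE c₀.2, G.greedyE_movesValid c₀.2, fun σ hσ => ?_⟩
    set τ := G.greedyE c₀.2 with hτdef
    have st0 : ((posFrom G σ τ c₀ b₀ 0, (decide (0 % 2 = 0) == b₀)) : (PP × PE) × Bool)
        = (c₀, b₀) := by cases b₀ <;> rfl
    have main : ∀ n, n ≤ k → ((k - n : ℕ) : ℕ∞) ≤
        G.label (posFrom G σ τ c₀ b₀ n, (decide (n % 2 = 0) == b₀)) := by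
      intro n
      induction n with
      | zero =>
        intro _
        rw [st0, h]
        simp
      | succ n ih =>
        intro hnk
        have hn : n < k := hnk
        have ihn := ih (le_of_lt hn)
        have hFn : ¬ G.F (posFrom G σ τ c₀ b₀ n).1 (posFrom G σ τ c₀ b₀ n).2 := by
          intro hF
          rw [G.label_final hF] at ihn
          have hz : (k - n : ℕ) = 0 := by exact_mod_cast le_antisymm ihn zero_le
          omega
        have hstep := G.evader_step c₀.2 σ hσ c₀ b₀ n hFn
        have h2 : ((k - n : ℕ) : ℕ∞) ≤
            G.label (posFrom G σ τ c₀ b₀ (n+1), (decide ((n+1) % 2 = 0) == b₀)) + 1 :=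
          le_trans ihn hstep
        rcases eq_or_ne (G.label (posFrom G σ τ c₀ b₀ (n+1), (decide ((n+1) % 2 = 0) == b₀))) ⊤
          with hT | hT
        · rw [hT]; exact le_top
        · lift G.label (posFrom G σ τ c₀ b₀ (n+1), (decide ((n+1) % 2 = 0) == b₀)) to ℕ
            using hT with m hm
          have hle : (k - n : ℕ) ≤ m + 1 := by exact_mod_cast h2
          exact_mod_cast (show k - (n+1) ≤ m by omega)
    intro n hnk hF
    have hlow := main n (le_of_lt hnk)
    rw [G.label_final hF] at hlow
    have hz : (k - n : ℕ) = 0 := by exact_mod_cast le_antisymm hlow zero_le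
    omega

end GCR
end
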